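/- arXiv:1907.10350 — 6 statements merged into one kernel-verified Lean document; each statement's English description precedes it below -/
import Mathlib

section
/- Let R be a finite ring, let r ∈ R with r ≠ 0, and let x ∈ R. In the r-noncommuting graph Γ_R^r, the degree of the vertex x equals |R| - |T_{x,r}| - 1 if 2r = 0, and equals |R| - 2|T_{x,r}| - 1 if 2r ≠ 0. -/
/-- The `r`-noncommuting graph of a finite ring `R`: vertices are elements of `R`,
and distinct `x`, `y` are adjacent iff `x*y - y*x ≠ r` and `x*y - y*x ≠ -r`. -/
def ncGraph {R : Type*} [NonUnitalRing R] (r : R) : SimpleGraph R where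
  Adj x y := x ≠ y ∧ x * y - y * x ≠ r ∧ x * y - y * x ≠ -r
  symm := ⟨by
    rintro x y ⟨h1, h2, h3⟩
    refine ⟨h1.symm, fun h => h3 ?_, fun h => h2 ?_⟩
    · rw [← neg_sub (y * x) (x * y), h]
    · rw [← neg_sub (y * x) (x * y), h, neg_neg]⟩
  loopless := ⟨fun x h => h.1 rfl⟩

/-- for r ≠ 0, degree of x in Γ_R^r is |R| - |T_{x,r}| - 1 if 2r = 0
and |R| - 2|T_{x,r}| - 1 if 2r ≠ 0. -/
theorem stmt1 {R : Type*} [NonUnitalRing R] [Fintype R] (r : R) (hr : r ≠ 0) (x : R) :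
    (r + r = 0 →
      ((ncGraph r).neighborSet x).ncard
        = Nat.card R - ({y : R | x * y - y * x = r}).ncard - 1) ∧
    (r + r ≠ 0 →
      ((ncGraph r).neighborSet x).ncard
        = Nat.card R - 2 * ({y : R | x * y - y * x = r}).ncard - 1) := by
  classical
  set T : R → Set R := fun s => {y : R | x * y - y * x = s} with hT
  have hxT : ∀ s : R, s ≠ 0 → x ∉ T s := by
    intro s hs h
    exact hs (by simpa using h.symm)
  have himg : (fun y => x + x - y) '' T r = T (-r) := by
    ext y
    constructor
    · rintro ⟨z, hz, rfl⟩
      simp only [hT, Set.mem_setOf_eq] at hz ⊢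
      rw [mul_sub, sub_mul, mul_add, add_mul]
      rw [← hz]; abel
    · intro hy
      refine ⟨x + x - y, ?_, sub_sub_cancel _ _⟩
      simp only [hT, Set.mem_setOf_eq] at hy ⊢
      rw [mul_sub, sub_mul, mul_add, add_mul,
        show x*x+x*x-x*y-(x*x+x*x-y*x) = -(x*y - y*x) from by abel, hy, neg_neg]
  have hcardneg : (T (-r)).ncard = (T r).ncard := by
    rw [← himg, Set.ncard_image_of_injective _ (fun a b h => sub_right_injective h)]
  have hnbhd : (ncGraph r).neighborSet x = (({x} : Set R) ∪ (T r ∪ T (-r)))ᶜ := by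
    ext y
    simp only [SimpleGraph.mem_neighborSet, ncGraph, Set.mem_compl_iff, Set.mem_union,
      Set.mem_singleton_iff, hT, Set.mem_setOf_eq]
    constructor
    · rintro ⟨h1, h2, h3⟩
      push_neg
      exact ⟨fun h => h1 h.symm, h2, h3⟩
    · intro h
      push_neg at h
      exact ⟨fun h' => h.1 h'.symm, h.2.1, h.2.2⟩
  have hcompl : ∀ s : Set R, sᶜ.ncard = Nat.card R - s.ncard := by
    intro s
    have := Set.ncard_add_ncard_compl s
    omega
  constructor
  · intro h2r
    have hneg : -r = r := neg_eq_of_add_eq_zero_left h2r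
    rw [hnbhd, hneg, Set.union_self, ← Set.insert_eq, hcompl,
      Set.ncard_insert_of_notMem (hxT r hr) (Set.toFinite _)]
    rw [show ({y : R | x * y - y * x = r}) = T r from rfl]
    omega
  · intro h2r
    have hdisj : Disjoint (T r) (T (-r)) := by
      rw [Set.disjoint_left]
      intro y hy hy'
      simp only [hT, Set.mem_setOf_eq] at hy hy'
      exact h2r (eq_neg_iff_add_eq_zero.mp (hy.symm.trans hy'))
    have hxU : x ∉ T r ∪ T (-r) := by
      simp only [Set.mem_union, not_or]
      exact ⟨hxT r hr, hxT (-r) (by simpa using hr)⟩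
    rw [hnbhd, ← Set.insert_eq, hcompl,
      Set.ncard_insert_of_notMem hxU (Set.toFinite _),
      Set.ncard_union_eq hdisj (Set.toFinite _) (Set.toFinite _), hcardneg]
    rw [show ({y : R | x * y - y * x = r}) = T r from rfl]
    omega
end

section
/- Let R be a finite ring. Then the 0-noncommuting graph Γ_R^0 is not complete bipartite; that is, there do not exist disjoint nonempty subsets V₁, V₂ of R with V₁ ∪ V₂ = R such that two distinct vertices x and y are adjacent in Γ_R^0 if and only if one of them lies in V₁ and the other in V₂. -/
/-- Γ_R^0 is not complete bipartite. -/
theorem stmt8 {R : Type*} [NonUnitalRing R] [Fintype R] :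
    ¬ ∃ V₁ V₂ : Set R, V₁.Nonempty ∧ V₂.Nonempty ∧ Disjoint V₁ V₂ ∧ V₁ ∪ V₂ = Set.univ ∧
      ∀ x y : R, x ≠ y →
        ((ncGraph (0 : R)).Adj x y ↔ (x ∈ V₁ ∧ y ∈ V₂) ∨ (x ∈ V₂ ∧ y ∈ V₁)) := by
  rintro ⟨V₁, V₂, ⟨a, ha⟩, ⟨b, hb⟩, hdisj, hunion, hadj⟩
  have h0 : (0 : R) ∈ V₁ ∪ V₂ := hunion ▸ Set.mem_univ 0
  have key : ∀ y : R, y ≠ 0 → ¬ (ncGraph (0 : R)).Adj 0 y := by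
    intro y hy h
    exact h.2.1 (by simp)
  cases h0 with
  | inl h01 =>
    have hb0 : b ≠ 0 := fun h => hdisj.ne_of_mem h01 hb (h.symm)
    exact key b hb0 ((hadj 0 b (Ne.symm hb0)).mpr (Or.inl ⟨h01, hb⟩))
  | inr h02 =>
    have ha0 : a ≠ 0 := fun h => hdisj.ne_of_mem ha h02 h
    exact key a ha0 ((hadj 0 a (Ne.symm ha0)).mpr (Or.inr ⟨h02, ha⟩))
end

section
/- Let R be a finite ring with |R| ≥ 3 and |Z(R)| ≥ 2, and let r ∈ R with r ≠ 0. Then the r-noncommuting graph Γ_R^r is not complete bipartite; that is, there do not exist disjoint nonempty subsets V₁, V₂ of R with V₁ ∪ V₂ = R such that two distinct vertices x and y are adjacent in Γ_R^r if and only if one of them lies in V₁ and the other in V₂. -/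
/-- The center of R as a set. -/
def centerSet (R : Type*) [NonUnitalRing R] : Set R := {z | ∀ x, z * x = x * z}

/-- if |R| ≥ 3, |Z(R)| ≥ 2 and r ≠ 0 then Γ_R^r is not complete bipartite. -/
theorem stmt9 {R : Type*} [NonUnitalRing R] [Fintype R]
    (hcard : 3 ≤ Nat.card R) (hZ : 2 ≤ (centerSet R).ncard) (r : R) (hr : r ≠ 0) :
    ¬ ∃ V₁ V₂ : Set R, V₁.Nonempty ∧ V₂.Nonempty ∧ Disjoint V₁ V₂ ∧ V₁ ∪ V₂ = Set.univ ∧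
      ∀ x y : R, x ≠ y →
        ((ncGraph r).Adj x y ↔ (x ∈ V₁ ∧ y ∈ V₂) ∨ (x ∈ V₂ ∧ y ∈ V₁)) := by
  rintro ⟨V₁, V₂, h1, h2, hdisj, huniv, hadj⟩
  have hZfin : (centerSet R).Finite := Set.toFinite _
  obtain ⟨z₁, z₂, hz₁, hz₂, hne⟩ := (Set.one_lt_ncard_iff hZfin).mp (by omega)
  -- a central element is adjacent to any distinct element
  have hadjc : ∀ z ∈ centerSet R, ∀ x : R, z ≠ x → (ncGraph r).Adj z x := by
    intro z hz x hx
    refine ⟨hx, ?_, ?_⟩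
    · rw [hz x, sub_self]; exact fun h => hr h.symm
    · rw [hz x, sub_self]; intro h; exact hr (neg_eq_zero.mp h.symm)
  -- find x distinct from z₁ and z₂
  have hpairne : ({z₁, z₂} : Set R) ≠ Set.univ := by
    intro h
    have h1 : ({z₁, z₂} : Set R).ncard ≤ 2 := by
      refine le_trans (Set.ncard_insert_le _ _) ?_
      simp [Set.ncard_singleton]
    rw [h, Set.ncard_univ] at h1
    omega
  obtain ⟨x, hx⟩ : ∃ x : R, x ∉ ({z₁, z₂} : Set R) := by
    by_contra h
    push_neg at h
    exact hpairne (Set.eq_univ_of_forall h)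
  simp only [Set.mem_insert_iff, Set.mem_singleton_iff, not_or] at hx
  have hx1 : z₁ ≠ x := fun h => hx.1 h.symm
  have hx2 : z₂ ≠ x := fun h => hx.2 h.symm
  have A12 := (hadj z₁ z₂ hne).mp (hadjc z₁ hz₁ z₂ hne)
  have A1x := (hadj z₁ x hx1).mp (hadjc z₁ hz₁ x hx1)
  have A2x := (hadj z₂ x hx2).mp (hadjc z₂ hz₂ x hx2)
  have D := Set.disjoint_left.mp hdisj
  tauto
end

section
/- Let R be a finite ring, let r ∈ R, and let x ∈ R ∖ Z(R) be a vertex of Δ_R^r. Then: (a) if r = 0, the degree of x in Δ_R^r equals |R| - |C_R(x)|; (b) if r ≠ 0 and 2r = 0, the degree of x equals |R| - |Z(R)| - 1 when T_{x,r} = ∅ and equals |R| - |Z(R)| - |C_R(x)| - 1 otherwise; (c) if r ≠ 0 and 2r ≠ 0, the degree of x equals |R| - |Z(R)| - 1 when T_{x,r} = ∅ and equals |R| - |Z(R)| - 2|C_R(x)| - 1 otherwise. -/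
/-- The induced subgraph of the r-noncommuting graph on the non-central elements. -/
def deltaGraph {R : Type*} [NonUnitalRing R] (r : R) :
    SimpleGraph {x : R // x ∉ centerSet R} :=
  (ncGraph r).comap Subtype.val

section Aux
variable {R : Type*} [NonUnitalRing R] [Fintype R]

omit [Fintype R] in
lemma comm_aux (x y t : R) : x*(y+t) - (y+t)*x = (x*y - y*x) + (x*t - t*x) := by
  rw [mul_add, add_mul]; abel

lemma T_card (s x t : R) (ht : x*t - t*x = s) :
    {y : R | x*y - y*x = s}.ncard = {y : R | x*y = y*x}.ncard := by
  have himg : {y : R | x*y - y*x = s} = (fun y => y + t) '' {y : R | x*y = y*x} := by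
    ext z
    simp only [Set.mem_setOf_eq, Set.mem_image]
    constructor
    · intro hz
      refine ⟨z - t, ?_, by abel⟩
      have h := comm_aux x (z - t) t
      rw [sub_add_cancel, hz, ht] at h
      exact sub_eq_zero.mp (right_eq_add.mp h)
    · rintro ⟨y, hy, rfl⟩
      rw [comm_aux, sub_eq_zero.mpr hy, ht, zero_add]
  rw [himg, Set.ncard_image_of_injective _ (add_left_injective t)]

lemma neigh_eq (r x : R) (hx : x ∉ centerSet R) :
    ((deltaGraph r).neighborSet ⟨x, hx⟩).ncard
      = ((centerSet R ∪ {x} ∪ {y : R | x*y - y*x = r} ∪ {y : R | x*y - y*x = -r})ᶜ).ncard := by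
  rw [← Set.ncard_image_of_injective _ (Subtype.val_injective
      (p := fun a => a ∉ centerSet R))]
  congr 1
  ext z
  simp only [Set.mem_image, SimpleGraph.mem_neighborSet, deltaGraph, ncGraph,
    SimpleGraph.comap_adj, Set.mem_compl_iff, Set.mem_union, Set.mem_singleton_iff,
    Set.mem_setOf_eq, Subtype.exists]
  constructor
  · rintro ⟨a, ha, ⟨hne, h1, h2⟩, rfl⟩
    push_neg
    exact ⟨⟨⟨ha, fun h => hne h.symm⟩, h1⟩, h2⟩
  · intro h
    push_neg at h
    obtain ⟨⟨⟨hz, hzx⟩, h1⟩, h2⟩ := h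
    exact ⟨z, hz, ⟨fun h => hzx h.symm, h1, h2⟩, rfl⟩

lemma center_sub (x z : R) (hz : z ∈ centerSet R) : x * z - z * x = 0 :=
  sub_eq_zero.mpr (hz x).symm

end Aux

/-- degrees of vertices in Δ_R^r. -/
theorem stmt15 {R : Type*} [NonUnitalRing R] [Fintype R] (r : R)
    (x : R) (hx : x ∉ centerSet R) :
    (r = 0 →
      ((deltaGraph r).neighborSet ⟨x, hx⟩).ncard
        = Nat.card R - ({y : R | x * y = y * x}).ncard) ∧
    (r ≠ 0 → r + r = 0 →
      (({y : R | x * y - y * x = r}) = ∅ →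
        ((deltaGraph r).neighborSet ⟨x, hx⟩).ncard
          = Nat.card R - (centerSet R).ncard - 1) ∧
      (({y : R | x * y - y * x = r}) ≠ ∅ →
        ((deltaGraph r).neighborSet ⟨x, hx⟩).ncard
          = Nat.card R - (centerSet R).ncard - ({y : R | x * y = y * x}).ncard - 1)) ∧
    (r ≠ 0 → r + r ≠ 0 →
      (({y : R | x * y - y * x = r}) = ∅ →
        ((deltaGraph r).neighborSet ⟨x, hx⟩).ncard
          = Nat.card R - (centerSet R).ncard - 1) ∧
      (({y : R | x * y - y * x = r}) ≠ ∅ →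
        ((deltaGraph r).neighborSet ⟨x, hx⟩).ncard
          = Nat.card R - (centerSet R).ncard - 2 * ({y : R | x * y = y * x}).ncard - 1)) := by
  have key := neigh_eq r x hx
  have hcompl : ∀ s : Set R, (sᶜ).ncard = Nat.card R - s.ncard := by
    intro s
    rw [Set.compl_eq_univ_diff, Set.ncard_diff (Set.subset_univ s), Set.ncard_univ]
  have hdisj1 : Disjoint (centerSet R) ({x} : Set R) := by
    simp [Set.disjoint_singleton_right, hx]
  have hdisjT : ∀ s : R, s ≠ 0 → Disjoint (centerSet R ∪ {x}) {y : R | x*y - y*x = s} := by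
    intro s hs
    rw [Set.disjoint_left]
    intro a ha hA
    simp only [Set.mem_union, Set.mem_singleton_iff] at ha
    simp only [Set.mem_setOf_eq] at hA
    rcases ha with ha | rfl
    · exact hs (hA.symm.trans (center_sub x a ha))
    · rw [sub_self] at hA
      exact hs hA.symm
  have hneg : ∀ z : R, x * (-z) - (-z) * x = -(x*z - z*x) := by
    intro z; rw [mul_neg, neg_mul]; abel
  refine ⟨?_, ?_, ?_⟩
  · rintro rfl
    rw [key, hcompl]
    congr 2
    ext z
    simp only [Set.mem_union, Set.mem_singleton_iff, Set.mem_setOf_eq, neg_zero, sub_eq_zero]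
    constructor
    · rintro (((hz | rfl) | h) | h)
      · exact (hz x).symm
      · rfl
      · exact h
      · exact h
    · exact fun h => Or.inl (Or.inr h)
  · intro hr h2
    have hnegr : -r = r := neg_eq_of_add_eq_zero_left h2
    have hTT : {y : R | x*y - y*x = -r} = {y : R | x*y - y*x = r} := by rw [hnegr]
    constructor
    · intro hT
      rw [key, hcompl, hTT, hT]
      simp only [Set.union_empty]
      rw [Set.ncard_union_eq hdisj1 (Set.toFinite _) (Set.toFinite _), Set.ncard_singleton]
      omega
    · intro hT
      obtain ⟨t, ht⟩ := Set.nonempty_iff_ne_empty.mpr hT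
      rw [key, hcompl, hTT, Set.union_assoc, Set.union_self,
        Set.ncard_union_eq (hdisjT r hr) (Set.toFinite _) (Set.toFinite _),
        Set.ncard_union_eq hdisj1 (Set.toFinite _) (Set.toFinite _),
        Set.ncard_singleton, T_card r x t ht]
      omega
  · intro hr h2
    constructor
    · intro hT
      have hT' : {y : R | x*y - y*x = -r} = ∅ := by
        ext z
        simp only [Set.mem_setOf_eq, Set.mem_empty_iff_false, iff_false]
        intro hz
        have hm : -z ∈ {y : R | x*y - y*x = r} := by
          simp only [Set.mem_setOf_eq]
          rw [hneg z, hz, neg_neg]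
        rw [hT] at hm
        exact hm
      rw [key, hcompl, hT, hT']
      simp only [Set.union_empty]
      rw [Set.ncard_union_eq hdisj1 (Set.toFinite _) (Set.toFinite _), Set.ncard_singleton]
      omega
    · intro hT
      obtain ⟨t, ht⟩ := Set.nonempty_iff_ne_empty.mpr hT
      have ht' : x * (-t) - (-t) * x = -r := by rw [hneg t, ht]
      have hrne : -r ≠ 0 := fun h => hr (neg_eq_zero.mp h)
      have hdisj3 : Disjoint (centerSet R ∪ {x} ∪ {y : R | x*y - y*x = r})
          {y : R | x*y - y*x = -r} := by
        rw [Set.disjoint_left]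
        intro a ha hA
        simp only [Set.mem_union, Set.mem_singleton_iff, Set.mem_setOf_eq] at ha
        simp only [Set.mem_setOf_eq] at hA
        rcases ha with (ha | rfl) | ha
        · exact hrne (hA.symm.trans (center_sub x a ha))
        · rw [sub_self] at hA
          exact hrne hA.symm
        · exact h2 (add_eq_zero_iff_eq_neg.mpr (ha.symm.trans hA))
      rw [key, hcompl,
        Set.ncard_union_eq hdisj3 (Set.toFinite _) (Set.toFinite _),
        Set.ncard_union_eq (hdisjT r hr) (Set.toFinite _) (Set.toFinite _),
        Set.ncard_union_eq hdisj1 (Set.toFinite _) (Set.toFinite _),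
        Set.ncard_singleton, T_card r x t ht, T_card (-r) x (-t) ht']
      omega
end

section
/- Let R be a finite noncommutative ring with |R| ≠ 8 and |R| ≠ 12, and let r ∈ K(R). Then Δ_R^r has a vertex of degree 2 if and only if r = 0 and |R| = 4 (equivalently, r = 0 and R is isomorphic to one of the two noncommutative rings E(4) or F(4) of order 4). -/
section Auxiliary

variable {R : Type*} [NonUnitalRing R]

lemma zero_mem_centerSet' : (0 : R) ∈ centerSet R := fun x => by simp

lemma centerSet_comm' {y : R} (h : y ∈ centerSet R) (x₀ : R) : x₀ * y - y * x₀ = 0 :=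
  sub_eq_zero.mpr (h x₀).symm

/-- The center as an additive subgroup. -/
def ZSub' (R : Type*) [NonUnitalRing R] : AddSubgroup R where
  carrier := centerSet R
  zero_mem' := zero_mem_centerSet'
  add_mem' := fun {a b} ha hb x => by rw [add_mul, mul_add, ha x, hb x]
  neg_mem' := fun {a} ha x => by rw [neg_mul, mul_neg, ha x]

/-- The centralizer of `x₀` as an additive subgroup. -/
def KerSub' (x₀ : R) : AddSubgroup R where
  carrier := {y | x₀ * y - y * x₀ = 0}
  zero_mem' := by simp
  add_mem' := fun {a b} ha hb => by
    have ha' : x₀ * a - a * x₀ = 0 := ha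
    have hb' : x₀ * b - b * x₀ = 0 := hb
    show x₀ * (a + b) - (a + b) * x₀ = 0
    have h : x₀ * (a + b) - (a + b) * x₀ = (x₀ * a - a * x₀) + (x₀ * b - b * x₀) := by
      noncomm_ring
    rw [h, ha', hb', add_zero]
  neg_mem' := fun {a} ha => by
    have ha' : x₀ * a - a * x₀ = 0 := ha
    show x₀ * (-a) - (-a) * x₀ = 0
    have h : x₀ * (-a) - (-a) * x₀ = -(x₀ * a - a * x₀) := by noncomm_ring
    rw [h, ha', neg_zero]

lemma addsub_card_dvd' {G : Type*} [AddGroup G] (H : AddSubgroup G) :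
    Nat.card H ∣ Nat.card G :=
  (AddSubgroup.card_dvd_of_le (le_top : H ≤ ⊤)).trans
    (dvd_of_eq (Nat.card_congr AddSubgroup.topEquiv.toEquiv))

lemma ncard_coe_sub' (H : AddSubgroup R) : Nat.card H = (H : Set R).ncard := by
  rw [← SetLike.coe_sort_coe, Nat.card_coe_set_eq]

lemma center_ncard_dvd' : (centerSet R).ncard ∣ Nat.card R := by
  have h := addsub_card_dvd' (ZSub' R)
  rwa [ncard_coe_sub'] at h

lemma ker_ncard_dvd' (x₀ : R) :
    {y : R | x₀ * y - y * x₀ = 0}.ncard ∣ Nat.card R := by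
  have h := addsub_card_dvd' (KerSub' x₀)
  rwa [ncard_coe_sub'] at h

lemma center_ncard_dvd_ker' (x₀ : R) :
    (centerSet R).ncard ∣ {y : R | x₀ * y - y * x₀ = 0}.ncard := by
  have h := AddSubgroup.card_dvd_of_le
    (show ZSub' R ≤ KerSub' x₀ from fun y hy => centerSet_comm' hy x₀)
  rwa [ncard_coe_sub', ncard_coe_sub'] at h

lemma coset_ncard' (x₀ s y1 : R) (h : x₀ * y1 - y1 * x₀ = s) :
    {y : R | x₀ * y - y * x₀ = s}.ncard = {y : R | x₀ * y - y * x₀ = 0}.ncard := by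
  rw [← Set.ncard_image_of_injective {y : R | x₀ * y - y * x₀ = 0} (add_right_injective y1)]
  congr 1
  ext y
  simp only [Set.mem_image, Set.mem_setOf_eq]
  constructor
  · intro hy
    refine ⟨y - y1, ?_, by abel⟩
    have h2 : x₀ * (y - y1) - (y - y1) * x₀ = (x₀ * y - y * x₀) - (x₀ * y1 - y1 * x₀) := by
      noncomm_ring
    rw [h2, hy, h, sub_self]
  · rintro ⟨w, hw, rfl⟩
    have h2 : x₀ * (y1 + w) - (y1 + w) * x₀ = (x₀ * y1 - y1 * x₀) + (x₀ * w - w * x₀) := by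
      noncomm_ring
    rw [h2, hw, h, add_zero]

/-- The additive subgroup of elements of additive order dividing 2. -/
def InvSub (R : Type*) [NonUnitalRing R] : AddSubgroup R where
  carrier := {u | u + u = 0}
  zero_mem' := by simp
  add_mem' := fun {a b} ha hb => by
    have ha' : a + a = 0 := ha
    have hb' : b + b = 0 := hb
    show (a + b) + (a + b) = 0
    have h : (a + b) + (a + b) = (a + a) + (b + b) := by abel
    rw [h, ha', hb', add_zero]
  neg_mem' := fun {a} ha => by
    have ha' : a + a = 0 := ha
    show (-a) + (-a) = 0
    have h : (-a) + (-a) = -(a + a) := by abel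
    rw [h, ha', neg_zero]

lemma invsub_card_dvd_two [Fintype R] (m : ℕ) (hm : Odd m) (hN : Fintype.card R = 2 * m) :
    Nat.card (InvSub R) ∣ 2 := by
  haveI : Fintype (InvSub R) := Fintype.ofFinite _
  set d := Nat.card (InvSub R) with hd
  have hNc : Nat.card R = 2 * m := by rw [Nat.card_eq_fintype_card, hN]
  have hdvd : d ∣ 2 * m := (addsub_card_dvd' (InvSub R)).trans (dvd_of_eq hNc)
  have hd0 : d ≠ 0 := Nat.card_pos.ne'
  have hodd : ∀ p : ℕ, p.Prime → p ∣ d → p = 2 := by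
    intro p hp hpd
    by_contra hp2
    haveI : Fact p.Prime := ⟨hp⟩
    have hpc : p ∣ Fintype.card (InvSub R) := by rwa [← Nat.card_eq_fintype_card]
    obtain ⟨x, hx⟩ := exists_prime_addOrderOf_dvd_card (G := InvSub R) p hpc
    have h2x : x + x = 0 := Subtype.ext x.2
    have hdvd2 : addOrderOf x ∣ 2 :=
      addOrderOf_dvd_of_nsmul_eq_zero (by rw [two_nsmul]; exact h2x)
    rw [hx] at hdvd2
    exact hp2 ((Nat.prime_dvd_prime_iff_eq hp Nat.prime_two).mp hdvd2)
  have h4 : ¬ 4 ∣ d := by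
    intro h4d
    obtain ⟨k, hk⟩ := h4d.trans hdvd
    obtain ⟨j, hj⟩ := hm
    omega
  by_contra hnd
  have hd1 : d ≠ 1 := by intro h; exact hnd (h ▸ one_dvd 2)
  obtain ⟨p, hp, hpd⟩ := Nat.exists_prime_and_dvd hd1
  have hp2 : p = 2 := hodd p hp hpd
  subst hp2
  obtain ⟨e, he⟩ := hpd
  have he1 : e ≠ 1 := by intro h; rw [h, mul_one] at he; exact hnd (by rw [he])
  obtain ⟨q, hq, hqe⟩ := Nat.exists_prime_and_dvd he1
  have hq2 : q = 2 := hodd q hq (hqe.trans ⟨2, by omega⟩)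
  subst hq2
  obtain ⟨f, hf⟩ := hqe
  exact h4 ⟨f, by omega⟩

/-- In a ring whose order is twice an odd number, the center has even order. -/
lemma two_dvd_center_ncard [Fintype R] (m : ℕ) (hm : Odd m) (hN : Fintype.card R = 2 * m) :
    2 ∣ (centerSet R).ncard := by
  haveI : Fact (Nat.Prime 2) := ⟨Nat.prime_two⟩
  obtain ⟨t, ht⟩ := exists_prime_addOrderOf_dvd_card (G := R) 2
    (by rw [hN]; exact Dvd.intro m rfl)
  have ht0 : t ≠ 0 := by
    intro h; rw [h, addOrderOf_zero] at ht; omega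
  have h2t : t + t = 0 := by
    have h := addOrderOf_nsmul_eq_zero t
    rwa [ht, two_nsmul] at h
  have hmem : ∀ u : R, u + u = 0 → u = 0 ∨ u = t := by
    intro u hu
    by_contra hcon
    push_neg at hcon
    have hsub : ({0, t, u} : Set R) ⊆ (InvSub R : Set R) := by
      intro w hw
      rcases hw with rfl | rfl | rfl
      · exact (InvSub R).zero_mem
      · exact h2t
      · exact hu
    have h3 : ({0, t, u} : Set R).ncard = 3 := by
      rw [Set.ncard_insert_of_notMem (by simp [Ne.symm ht0, Ne.symm hcon.1]),
        Set.ncard_pair (fun h => hcon.2 h.symm)]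
    have hle3 : 3 ≤ Nat.card (InvSub R) := by
      rw [ncard_coe_sub', ← h3]
      exact Set.ncard_le_ncard hsub (Set.toFinite _)
    have hd2 := invsub_card_dvd_two m hm hN
    have := Nat.le_of_dvd (by norm_num) hd2
    omega
  have hNv : ∀ v : R, ((2 * m : ℕ) : ℤ) • v = 0 := by
    intro v
    have h := card_nsmul_eq_zero (G := R) (x := v)
    rw [hN] at h
    rw [natCast_zsmul]
    exact h
  have hev : ∀ w : R, w + w = 0 → (1 - (m : ℤ)) • w = 0 := by
    intro w hw
    obtain ⟨j, hj⟩ := hm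
    have h2 : (1 - (m : ℤ)) = (-(j : ℤ)) * 2 := by rw [hj]; push_cast; ring
    rw [h2, mul_zsmul, two_zsmul, hw, smul_zero]
  have hsplit : ∀ v : R, v = (1 - (m : ℤ)) • v + (m : ℤ) • v := by
    intro v
    rw [← add_zsmul]
    norm_num
  have hcen : t ∈ centerSet R := by
    intro v
    have hmv : (m : ℤ) • v + (m : ℤ) • v = 0 := by
      rw [← add_zsmul]
      have h : ((m : ℤ) + m) = ((2 * m : ℕ) : ℤ) := by push_cast; ring
      rw [h]; exact hNv v
    have htv : t * v = t * ((m : ℤ) • v) := by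
      conv_lhs => rw [hsplit v]
      rw [mul_add, mul_smul_comm]
      rw [hev (t * v) (by rw [← add_mul, h2t, zero_mul]), zero_add]
    have hvt : v * t = ((m : ℤ) • v) * t := by
      conv_lhs => rw [hsplit v]
      rw [add_mul, smul_mul_assoc]
      rw [hev (v * t) (by rw [← mul_add, h2t, mul_zero]), zero_add]
    rcases hmem ((m : ℤ) • v) hmv with h0 | h0
    · rw [htv, hvt, h0, mul_zero, zero_mul]
    · rw [htv, hvt, h0]
  have hle : AddSubgroup.zmultiples t ≤ ZSub' R := by
    rw [AddSubgroup.zmultiples_le]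
    exact hcen
  have hcard2 : Nat.card (AddSubgroup.zmultiples t) = 2 := by
    rw [Nat.card_zmultiples, ht]
  have h := AddSubgroup.card_dvd_of_le hle
  rwa [hcard2, ncard_coe_sub'] at h

lemma neighbor_ncard_eq [Fintype R] (r : R) (x : {a : R // a ∉ centerSet R}) :
    ((deltaGraph r).neighborSet x).ncard
      = {y : R | y ∉ centerSet R ∧ x.1 ≠ y ∧ x.1 * y - y * x.1 ≠ r
          ∧ x.1 * y - y * x.1 ≠ -r}.ncard := by
  rw [← Set.ncard_image_of_injective _ (Subtype.val_injective
    (p := fun a : R => a ∉ centerSet R))]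
  congr 1
  ext y
  simp only [Set.mem_image, SimpleGraph.mem_neighborSet, Set.mem_setOf_eq]
  constructor
  · rintro ⟨b, hadj, rfl⟩
    have h : (ncGraph r).Adj x.1 b.1 := hadj
    exact ⟨b.2, h.1, h.2.1, h.2.2⟩
  · rintro ⟨hy, hne, h1, h2⟩
    exact ⟨⟨y, hy⟩, show (ncGraph r).Adj x.1 y from ⟨hne, h1, h2⟩, rfl⟩

lemma partition_count [Fintype R] (r : R) (x₀ : R) (hx : x₀ ∉ centerSet R) :
    {y : R | y ∉ centerSet R ∧ x₀ ≠ y ∧ x₀ * y - y * x₀ ≠ r ∧ x₀ * y - y * x₀ ≠ -r}.ncard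
      + {y : R | y ∉ centerSet R ∧ x₀ ≠ y
          ∧ (x₀ * y - y * x₀ = r ∨ x₀ * y - y * x₀ = -r)}.ncard
      + ((centerSet R).ncard + 1) = Nat.card R := by
  classical
  have hAB : {y : R | y ∉ centerSet R ∧ x₀ ≠ y ∧ x₀ * y - y * x₀ ≠ r ∧ x₀ * y - y * x₀ ≠ -r}.ncard
      + {y : R | y ∉ centerSet R ∧ x₀ ≠ y ∧ (x₀ * y - y * x₀ = r ∨ x₀ * y - y * x₀ = -r)}.ncard
      = {y : R | y ∉ centerSet R ∧ x₀ ≠ y}.ncard := by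
    rw [← Set.ncard_union_eq (by
      rw [Set.disjoint_left]
      rintro y ⟨-, -, h1, h2⟩ ⟨-, -, h3 | h3⟩
      · exact h1 h3
      · exact h2 h3) (Set.toFinite _) (Set.toFinite _)]
    congr 1
    ext y
    simp only [Set.mem_union, Set.mem_setOf_eq]
    by_cases h1 : x₀ * y - y * x₀ = r <;> by_cases h2 : x₀ * y - y * x₀ = -r <;> tauto
  rw [hAB]
  have hV : {y : R | y ∉ centerSet R ∧ x₀ ≠ y}.ncard + ((centerSet R).ncard + 1)
      = (Set.univ : Set R).ncard := by
    rw [← Set.ncard_singleton x₀, ← Set.ncard_union_eq (by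
        rw [Set.disjoint_left]; rintro y hy rfl; exact hx hy) (Set.toFinite _) (Set.toFinite _),
      ← Set.ncard_union_eq (by
        rw [Set.disjoint_left]
        rintro y ⟨hy1, hy2⟩ (hy3 | hy3)
        · exact hy1 hy3
        · exact hy2 (by rw [Set.mem_singleton_iff] at hy3; exact hy3.symm))
        (Set.toFinite _) (Set.toFinite _)]
    congr 1
    ext y
    simp only [Set.mem_union, Set.mem_setOf_eq, Set.mem_singleton_iff, Set.mem_univ, iff_true]
    by_cases h1 : y ∈ centerSet R
    · tauto
    · by_cases h2 : x₀ = y <;> tauto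
  rw [hV, Set.ncard_univ]

lemma b_ncard_zero [Fintype R] (x₀ : R) (hx : x₀ ∉ centerSet R) :
    {y : R | y ∉ centerSet R ∧ x₀ ≠ y ∧ (x₀ * y - y * x₀ = 0 ∨ x₀ * y - y * x₀ = -0)}.ncard
      + ((centerSet R).ncard + 1) = {y : R | x₀ * y - y * x₀ = 0}.ncard := by
  classical
  rw [← Set.ncard_singleton x₀, ← Set.ncard_union_eq (by
      rw [Set.disjoint_left]; rintro y hy rfl; exact hx hy) (Set.toFinite _) (Set.toFinite _),
    ← Set.ncard_union_eq (by
      rw [Set.disjoint_left]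
      rintro y ⟨hy1, hy2, -⟩ (hy3 | hy3)
      · exact hy1 hy3
      · exact hy2 (by rw [Set.mem_singleton_iff] at hy3; exact hy3.symm))
      (Set.toFinite _) (Set.toFinite _)]
  congr 1
  ext y
  simp only [Set.mem_union, Set.mem_setOf_eq, Set.mem_singleton_iff, neg_zero, or_self]
  constructor
  · rintro (⟨-, -, h⟩ | h | rfl)
    · exact h
    · exact centerSet_comm' h x₀
    · exact sub_self _
  · intro h
    by_cases h1 : y ∈ centerSet R
    · tauto
    · by_cases h2 : x₀ = y <;> tauto

lemma b_eq_S (x₀ r : R) (hr0 : r ≠ 0) :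
    {y : R | y ∉ centerSet R ∧ x₀ ≠ y ∧ (x₀ * y - y * x₀ = r ∨ x₀ * y - y * x₀ = -r)}
      = {y : R | x₀ * y - y * x₀ = r ∨ x₀ * y - y * x₀ = -r} := by
  ext y
  simp only [Set.mem_setOf_eq]
  constructor
  · rintro ⟨-, -, h⟩; exact h
  · intro h
    have hnz : x₀ * y - y * x₀ ≠ 0 := by
      rcases h with h | h <;> rw [h]
      · exact hr0
      · simpa using hr0
    refine ⟨fun hc => hnz (centerSet_comm' hc x₀), fun hc => hnz (by rw [← hc, sub_self]), h⟩

lemma S_ncard_eq (x₀ r y1 : R) (hy1 : x₀ * y1 - y1 * x₀ = r) (h2r : r = -r) :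
    {y : R | x₀ * y - y * x₀ = r ∨ x₀ * y - y * x₀ = -r}.ncard
      = {y : R | x₀ * y - y * x₀ = 0}.ncard := by
  have h : {y : R | x₀ * y - y * x₀ = r ∨ x₀ * y - y * x₀ = -r}
      = {y : R | x₀ * y - y * x₀ = r} := by
    ext y; simp only [Set.mem_setOf_eq, ← h2r, or_self]
  rw [h, coset_ncard' x₀ r y1 hy1]

lemma S_ncard_eq2 [Fintype R] (x₀ r y1 : R) (hy1 : x₀ * y1 - y1 * x₀ = r) (h2r : r ≠ -r) :
    {y : R | x₀ * y - y * x₀ = r ∨ x₀ * y - y * x₀ = -r}.ncard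
      = {y : R | x₀ * y - y * x₀ = 0}.ncard + {y : R | x₀ * y - y * x₀ = 0}.ncard := by
  have hset : {y : R | x₀ * y - y * x₀ = r ∨ x₀ * y - y * x₀ = -r}
      = {y : R | x₀ * y - y * x₀ = r} ∪ {y : R | x₀ * y - y * x₀ = -r} := by
    ext y; simp [Set.mem_union, Set.mem_setOf_eq]
  have hy1' : x₀ * (-y1) - (-y1) * x₀ = -r := by
    have h : x₀ * (-y1) - (-y1) * x₀ = -(x₀ * y1 - y1 * x₀) := by noncomm_ring
    rw [h, hy1]
  rw [hset, Set.ncard_union_eq (by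
      rw [Set.disjoint_left]
      rintro y h1 h2
      simp only [Set.mem_setOf_eq] at h1 h2
      exact h2r (h1 ▸ h2)) (Set.toFinite _) (Set.toFinite _),
    coset_ncard' x₀ r y1 hy1, coset_ncard' x₀ (-r) (-y1) hy1']

end Auxiliary

/-- if R is noncommutative with |R| ≠ 8, 12 and r ∈ K(R), then Δ_R^r
has a vertex of degree 2 iff r = 0 and |R| = 4. -/
theorem stmt18 {R : Type*} [NonUnitalRing R] [Fintype R]
    (hnc : ∃ a b : R, a * b ≠ b * a) (hcard8 : Nat.card R ≠ 8)
    (hcard12 : Nat.card R ≠ 12)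
    (r : R) (hr : ∃ a b : R, a * b - b * a = r) :
    (∃ x : {a : R // a ∉ centerSet R}, ((deltaGraph r).neighborSet x).ncard = 2)
      ↔ (r = 0 ∧ Nat.card R = 4) := by
  classical
  have hNF : Nat.card R = Fintype.card R := Nat.card_eq_fintype_card
  constructor
  · rintro ⟨⟨x₀, hx⟩, hdeg⟩
    have hdeg' : {y : R | y ∉ centerSet R ∧ x₀ ≠ y ∧ x₀ * y - y * x₀ ≠ r
        ∧ x₀ * y - y * x₀ ≠ -r}.ncard = 2 := by
      have h := neighbor_ncard_eq r ⟨x₀, hx⟩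
      rw [hdeg] at h
      exact h.symm
    have hmain := partition_count r x₀ hx
    rw [hdeg'] at hmain
    -- notation
    set z := (centerSet R).ncard with hz
    set c := {y : R | x₀ * y - y * x₀ = 0}.ncard with hcdef
    have hzN : z ∣ Nat.card R := center_ncard_dvd'
    have hcN : c ∣ Nat.card R := ker_ncard_dvd' x₀
    have hzc : z ∣ c := center_ncard_dvd_ker' x₀
    have hx0ne : x₀ ≠ 0 := fun h => hx (h ▸ zero_mem_centerSet')
    have hc2 : 2 ≤ c := by
      have hsub : ({0, x₀} : Set R) ⊆ {y : R | x₀ * y - y * x₀ = 0} := by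
        rintro y (rfl | rfl)
        · simp
        · exact sub_self _
      calc 2 = ({0, x₀} : Set R).ncard := (Set.ncard_pair (Ne.symm hx0ne)).symm
        _ ≤ c := Set.ncard_le_ncard hsub (Set.toFinite _)
    have hcnez : c ≠ z := by
      intro hcz
      have heq : centerSet R = {y : R | x₀ * y - y * x₀ = 0} :=
        Set.eq_of_subset_of_ncard_le (fun y hy => centerSet_comm' hy x₀)
          (le_of_eq hcz) (Set.toFinite _)
      have hxk : x₀ ∈ {y : R | x₀ * y - y * x₀ = 0} := sub_self _
      rw [← heq] at hxk
      exact hx hxk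
    by_cases hr0 : r = 0
    · subst hr0
      have hB := b_ncard_zero x₀ hx
      -- hmain : 2 + B + (z+1) = N, hB : B + (z+1) = c
      have hNc : Nat.card R = c + 2 := by omega
      have hc2' : c ∣ 2 := by
        have h := Nat.dvd_sub hcN (dvd_refl c)
        rwa [show Nat.card R - c = 2 by omega] at h
      have hcle : c ≤ 2 := Nat.le_of_dvd (by norm_num) hc2'
      exact ⟨rfl, by omega⟩
    · rw [b_eq_S x₀ r hr0] at hmain
      by_cases hex : ∃ y : R, x₀ * y - y * x₀ = r ∨ x₀ * y - y * x₀ = -r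
      · obtain ⟨y', hy'⟩ := hex
        have hy1ex : ∃ y1 : R, x₀ * y1 - y1 * x₀ = r := by
          rcases hy' with h | h
          · exact ⟨y', h⟩
          · refine ⟨-y', ?_⟩
            have h2 : x₀ * (-y') - (-y') * x₀ = -(x₀ * y' - y' * x₀) := by noncomm_ring
            rw [h2, h, neg_neg]
        obtain ⟨y1, hy1⟩ := hy1ex
        exfalso
        by_cases h2r : r = -r
        · rw [S_ncard_eq x₀ r y1 hy1 h2r, ← hcdef] at hmain
          -- hmain : 2 + c + (z + 1) = N
          have hzdvd3 : z ∣ 3 := by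
            have h := Nat.dvd_sub (Nat.dvd_sub hzN hzc) (dvd_refl z)
            rwa [show Nat.card R - c - z = 3 by omega] at h
          rcases (Nat.prime_three.eq_one_or_self_of_dvd z hzdvd3) with hz1 | hz3
          · have hc4 : c ∣ 4 := by
              have h := Nat.dvd_sub hcN (dvd_refl c)
              rwa [show Nat.card R - c = 4 by omega] at h
            have hcle : c ≤ 4 := Nat.le_of_dvd (by norm_num) hc4
            have hc24 : c = 2 ∨ c = 4 := by interval_cases c <;> omega
            rcases hc24 with hc | hc
            · have h2z := two_dvd_center_ncard (R := R) 3 ⟨1, by norm_num⟩ (by omega)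
              omega
            · exact hcard8 (by omega)
          · have hc6 : c ∣ 6 := by
              have h := Nat.dvd_sub hcN (dvd_refl c)
              rwa [show Nat.card R - c = 6 by omega] at h
            have h3c : 3 ∣ c := hz3 ▸ hzc
            have hcle : c ≤ 6 := Nat.le_of_dvd (by norm_num) hc6
            have hc36 : c = 3 ∨ c = 6 := by interval_cases c <;> omega
            rcases hc36 with hc | hc
            · exact hcnez (by omega)
            · exact hcard12 (by omega)
        · rw [S_ncard_eq2 x₀ r y1 hy1 h2r, ← hcdef] at hmain
          -- hmain : 2 + (c + c) + (z + 1) = N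
          have hzdvd3 : z ∣ 3 := by
            have h := Nat.dvd_sub (Nat.dvd_sub (Nat.dvd_sub hzN hzc) hzc) (dvd_refl z)
            rwa [show Nat.card R - c - c - z = 3 by omega] at h
          rcases (Nat.prime_three.eq_one_or_self_of_dvd z hzdvd3) with hz1 | hz3
          · have hc4 : c ∣ 4 := by
              have h := Nat.dvd_sub hcN (dvd_add (dvd_refl c) (dvd_refl c))
              rwa [show Nat.card R - (c + c) = 4 by omega] at h
            have hcle : c ≤ 4 := Nat.le_of_dvd (by norm_num) hc4
            have hc24 : c = 2 ∨ c = 4 := by interval_cases c <;> omega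
            rcases hc24 with hc | hc
            · exact hcard8 (by omega)
            · exact hcard12 (by omega)
          · have hc6 : c ∣ 6 := by
              have h := Nat.dvd_sub hcN (dvd_add (dvd_refl c) (dvd_refl c))
              rwa [show Nat.card R - (c + c) = 6 by omega] at h
            have h3c : 3 ∣ c := hz3 ▸ hzc
            have hcle : c ≤ 6 := Nat.le_of_dvd (by norm_num) hc6
            have hc36 : c = 3 ∨ c = 6 := by interval_cases c <;> omega
            rcases hc36 with hc | hc
            · exact hcnez (by omega)
            · -- N = 18
              have h2z := two_dvd_center_ncard (R := R) 9 ⟨4, by norm_num⟩ (by omega)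
              omega
      · push_neg at hex
        have hS0 : {y : R | x₀ * y - y * x₀ = r ∨ x₀ * y - y * x₀ = -r} = ∅ := by
          ext y
          simp only [Set.mem_setOf_eq, Set.mem_empty_iff_false, iff_false, not_or]
          exact hex y
        rw [hS0, Set.ncard_empty] at hmain
        -- hmain : 2 + 0 + (z + 1) = N, so N = z + 3
        have hzdvd3 : z ∣ 3 := by
          have h := Nat.dvd_sub hzN (dvd_refl z)
          rwa [show Nat.card R - z = 3 by omega] at h
        rcases (Nat.prime_three.eq_one_or_self_of_dvd z hzdvd3) with hz1 | hz3
        · -- N = 4 : four-element argument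
          exfalso
          obtain ⟨a, b, hab⟩ := hr
          have hane : a ≠ 0 := by rintro rfl; apply hr0; rw [← hab]; simp
          have hbne : b ≠ 0 := by rintro rfl; apply hr0; rw [← hab]; simp
          have habne : a ≠ b := by rintro rfl; apply hr0; rw [← hab]; simp
          have habs : a + b ≠ 0 := by
            intro h
            have hb : b = -a := eq_neg_of_add_eq_zero_right h
            apply hr0
            rw [← hab, hb]
            noncomm_ring
          have hfin : Fintype.card R = 4 := by omega
          have hcard4 : ({0, a, b, a + b} : Finset R).card = 4 := by
            rw [Finset.card_insert_of_notMem (by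
                simp only [Finset.mem_insert, Finset.mem_singleton, not_or]
                exact ⟨Ne.symm hane, Ne.symm hbne, Ne.symm habs⟩),
              Finset.card_insert_of_notMem (by
                simp only [Finset.mem_insert, Finset.mem_singleton, not_or]
                exact ⟨habne, fun h => hbne (left_eq_add.mp h)⟩),
              Finset.card_insert_of_notMem (by
                simp only [Finset.mem_singleton]
                exact fun h => hane (right_eq_add.mp h)),
              Finset.card_singleton]
          have huniv : ({0, a, b, a + b} : Finset R) = Finset.univ :=
            Finset.eq_univ_of_card _ (by rw [hcard4, hfin])
          have hx4 : x₀ ∈ ({0, a, b, a + b} : Finset R) := huniv ▸ Finset.mem_univ x₀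
          simp only [Finset.mem_insert, Finset.mem_singleton] at hx4
          rcases hx4 with rfl | rfl | rfl | rfl
          · exact hx (fun u => by rw [zero_mul, mul_zero])
          · exact (hex b).1 hab
          · apply (hex a).2
            rw [← hab]
            noncomm_ring
          · apply (hex b).1
            rw [← hab]
            noncomm_ring
        · -- z = 3, N = 6 : centralizer must be everything
          exfalso
          have hc6 : c ∣ 6 := by rw [show (6:ℕ) = Nat.card R by omega]; exact hcN
          have h3c : 3 ∣ c := hz3 ▸ hzc
          have hcle : c ≤ 6 := Nat.le_of_dvd (by norm_num) hc6
          have hc36 : c = 3 ∨ c = 6 := by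
            interval_cases c <;> omega
          rcases hc36 with hc3 | hc6'
          · exact hcnez (by omega)
          · have hker : {y : R | x₀ * y - y * x₀ = 0} = Set.univ :=
              Set.eq_of_subset_of_ncard_le (Set.subset_univ _)
                (by rw [Set.ncard_univ]; omega) (Set.toFinite _)
            apply hx
            intro u
            have hu : u ∈ {y : R | x₀ * y - y * x₀ = 0} := hker ▸ Set.mem_univ u
            exact sub_eq_zero.mp hu
  · rintro ⟨rfl, hN4⟩
    obtain ⟨a, b, hab⟩ := hnc
    have ha : a ∉ centerSet R := fun h => hab (h b)
    refine ⟨⟨a, ha⟩, ?_⟩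
    have hdeg' : ((deltaGraph (0:R)).neighborSet ⟨a, ha⟩).ncard
        = {y : R | y ∉ centerSet R ∧ a ≠ y ∧ a * y - y * a ≠ 0
            ∧ a * y - y * a ≠ -0}.ncard := neighbor_ncard_eq 0 ⟨a, ha⟩
    rw [hdeg']
    have hmain := partition_count (0:R) a ha
    have hB := b_ncard_zero a ha
    set c := {y : R | a * y - y * a = 0}.ncard with hcdef
    have hcN : c ∣ Nat.card R := ker_ncard_dvd' a
    have hane : a ≠ 0 := fun h => ha (h ▸ zero_mem_centerSet')
    have hc2 : 2 ≤ c := by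
      have hsub : ({0, a} : Set R) ⊆ {y : R | a * y - y * a = 0} := by
        rintro y (rfl | rfl)
        · simp
        · exact sub_self _
      calc 2 = ({0, a} : Set R).ncard := (Set.ncard_pair (Ne.symm hane)).symm
        _ ≤ c := Set.ncard_le_ncard hsub (Set.toFinite _)
    have hcne4 : c ≠ 4 := by
      intro hc4
      have hker : {y : R | a * y - y * a = 0} = Set.univ :=
        Set.eq_of_subset_of_ncard_le (Set.subset_univ _)
          (by rw [Set.ncard_univ]; omega) (Set.toFinite _)
      have hbmem : b ∈ {y : R | a * y - y * a = 0} := hker ▸ Set.mem_univ b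
      exact hab (sub_eq_zero.mp hbmem)
    have hc4 : c ∣ 4 := hN4 ▸ hcN
    have hcle : c ≤ 4 := Nat.le_of_dvd (by norm_num) hc4
    have hceq2 : c = 2 := by interval_cases c <;> omega
    omega
end

section
/- Let R be a finite noncommutative ring with |R| ≠ 16 and |R| ≠ 18, and let r ∈ K(R). Then Δ_R^r has no vertex of degree 3. -/
section Aux

lemma squarefree_of_bounded' (n : ℕ) (h0 : 0 < n) (h : ∀ m, m < n + 1 → m * m ∣ n → m = 1) :
    Squarefree n := by
  intro x hx
  have hxn : x ∣ n := (dvd_mul_right x x).trans hx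
  have : x ≤ n := Nat.le_of_dvd h0 hxn
  rw [h x (by omega) hx]
  exact isUnit_one

lemma isAddCyclic_of_squarefree_card' {G : Type*} [AddCommGroup G] [Finite G]
    (h : Squarefree (Nat.card G)) : IsAddCyclic G := by
  apply IsAddCyclic.of_exponent_eq_card
  have hdvd : AddMonoid.exponent G ∣ Nat.card G := AddGroup.exponent_dvd_nat_card
  refine Nat.dvd_antisymm hdvd ?_
  have hcard : (Nat.card G) ≠ 0 := Nat.card_pos.ne'
  have hexp : AddMonoid.exponent G ≠ 0 := AddMonoid.exponent_ne_zero_of_finite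
  rw [← Nat.factorization_le_iff_dvd hcard hexp]
  intro p
  rcases Nat.eq_zero_or_pos ((Nat.card G).factorization p) with h0 | hpos
  · simp [h0]
  · have hp : p.Prime := Nat.prime_of_mem_primeFactors (by
      rw [Nat.mem_primeFactors]
      refine ⟨?_, ?_, hcard⟩
      · by_contra hnp
        rw [Nat.factorization_eq_zero_of_not_prime _ hnp] at hpos; omega
      · exact Nat.dvd_of_factorization_pos hpos.ne')
    have hpdvd : p ∣ Nat.card G := Nat.dvd_of_factorization_pos hpos.ne'
    have : ∃ g : G, addOrderOf g = p := by
      have := Fintype.ofFinite G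
      have : Fact p.Prime := ⟨hp⟩
      exact exists_prime_addOrderOf_dvd_card p (by rwa [← Nat.card_eq_fintype_card])
    obtain ⟨g, hg⟩ := this
    have hpe : p ∣ AddMonoid.exponent G := hg ▸ AddMonoid.addOrder_dvd_exponent g
    have h1 : (Nat.card G).factorization p ≤ 1 := h.natFactorization_le_one p
    have h2 : 1 ≤ (AddMonoid.exponent G).factorization p :=
      hp.factorization_pos_of_dvd hexp hpe
    omega

lemma comm_of_quot_isAddCyclic' {R : Type*} [NonUnitalRing R] (Zs : AddSubgroup R)
    (hZ : ∀ z ∈ Zs, ∀ a : R, z * a = a * z) (h : IsAddCyclic (R ⧸ Zs)) :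
    ∀ a b : R, a * b = b * a := by
  obtain ⟨g, hg⟩ := h
  obtain ⟨x, rfl⟩ := QuotientAddGroup.mk_surjective g
  have key : ∀ a : R, ∃ (w : R) (m : ℤ), w ∈ Zs ∧ a = w + m • x := by
    intro a
    obtain ⟨m, hm⟩ := hg (QuotientAddGroup.mk a)
    refine ⟨a - m • x, m, ?_, by abel⟩
    rw [← QuotientAddGroup.eq_zero_iff]
    have hm' : m • ((x : R) : R ⧸ Zs) = (a : R ⧸ Zs) := hm
    have : ((a - m • x : R) : R ⧸ Zs) = (a : R ⧸ Zs) - m • (x : R ⧸ Zs) := by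
      push_cast [QuotientAddGroup.mk_sub, QuotientAddGroup.mk_zsmul]
      rfl
    rw [this, hm', sub_self]
  intro a b
  obtain ⟨wa, ma, hwa, ha⟩ := key a
  obtain ⟨wb, mb, hwb, hb⟩ := key b
  subst ha hb
  have expand : ∀ (u v p q : R), (u + v) * (p + q) = u * p + u * q + (v * p + v * q) := by
    intro u v p q; rw [add_mul, mul_add, mul_add]
  rw [expand, expand]
  have e1 : wa * wb = wb * wa := hZ wa hwa wb
  have e2 : wa * (mb • x) = (mb • x) * wa := hZ wa hwa _
  have e3 : (ma • x) * wb = wb * (ma • x) := (hZ wb hwb _).symm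
  have e4 : (ma • x) * (mb • x) = (mb • x) * (ma • x) := by
    rw [smul_mul_assoc, smul_mul_assoc, mul_smul_comm, mul_smul_comm, smul_comm]
  rw [e1, e2, e3, e4]; abel

lemma dvd3cases' (z : ℕ) (h : z ∣ 3) : z = 1 ∨ z = 3 := by
  have h3 : z ≤ 3 := Nat.le_of_dvd (by norm_num) h
  obtain ⟨w, hw⟩ := h
  rcases z with _ | _ | _ | _ | z <;> omega

lemma dvd4cases' (z : ℕ) (h : z ∣ 4) : z = 1 ∨ z = 2 ∨ z = 4 := by
  have h4 : z ≤ 4 := Nat.le_of_dvd (by norm_num) h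
  obtain ⟨w, hw⟩ := h
  rcases z with _ | _ | _ | _ | _ | z <;> omega

/-- The arithmetic core. -/
lemma numCore' (z c n q t : ℕ) (hz : 0 < z) (hzc : z ∣ c) (hcn : c ∣ n)
    (hzlt : z < c) (hclt : c < n) (hn : n = q * z) (h16 : n ≠ 16) (h18 : n ≠ 18)
    (hbr : n = c + 3 ∨ ((t = 0 ∨ t = c ∨ t = 2 * c) ∧ n = z + 4 + t)) :
    Squarefree q := by
  have h2z : 2 * z ≤ c := by
    obtain ⟨k, hk⟩ := hzc
    have hk2 : 2 ≤ k := by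
      rcases k with _ | _ | k <;> omega
    calc 2 * z = z * 2 := by ring
    _ ≤ z * k := Nat.mul_le_mul_left z hk2
    _ = c := hk.symm
  rcases hbr with h | ⟨ht, h⟩
  · -- n = c + 3
    have hc3 : c ∣ 3 := (Nat.dvd_add_right (dvd_refl c)).mp (h ▸ hcn)
    have hc3' : c ≤ 3 := Nat.le_of_dvd (by norm_num) hc3
    have hc : c = 3 := by rcases dvd3cases' c hc3 with rfl | rfl <;> omega
    subst hc
    obtain rfl : z = 1 := by rcases dvd3cases' z hzc with rfl | rfl <;> omega
    have hq : q = 6 := by omega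
    subst hq
    exact squarefree_of_bounded' 6 (by norm_num) (by decide)
  · have hzn : z ∣ n := hzc.trans hcn
    rcases ht with ht | ht | ht
    · -- t = 0, n = z + 4
      subst ht
      have hn4 : n = z + 4 := by omega
      have hz4 : z ∣ 4 := (Nat.dvd_add_right (dvd_refl z)).mp (hn4 ▸ hzn)
      rcases dvd4cases' z hz4 with rfl | rfl | rfl
      · have hq : q = 5 := by omega
        subst hq; exact squarefree_of_bounded' 5 (by norm_num) (by decide)
      · have hq : q = 3 := by omega
        subst hq; exact squarefree_of_bounded' 3 (by norm_num) (by decide)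
      · have hq : q = 2 := by omega
        subst hq; exact squarefree_of_bounded' 2 (by norm_num) (by decide)
    · -- t = c
      have hcz4 : c ∣ z + 4 := by
        have hne : n = c + (z + 4) := by omega
        exact (Nat.dvd_add_right (dvd_refl c)).mp (hne ▸ hcn)
      have hcle : c ≤ z + 4 := Nat.le_of_dvd (by omega) hcz4
      rcases Nat.eq_or_lt_of_le hcle with hceq | hclt2
      · have hz4 : z ∣ 4 := (Nat.dvd_add_right (dvd_refl z)).mp (hceq ▸ hzc)
        rcases dvd4cases' z hz4 with rfl | rfl | rfl
        · have hq : q = 10 := by omega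
          subst hq; exact squarefree_of_bounded' 10 (by norm_num) (by decide)
        · have hq : q = 6 := by omega
          subst hq; exact squarefree_of_bounded' 6 (by norm_num) (by decide)
        · omega
      · obtain ⟨m, hm⟩ := hcz4
        have hm2 : 2 ≤ m := by
          rcases m with _ | _ | m <;> omega
        have h2c : 2 * c ≤ z + 4 := by
          calc 2 * c = c * 2 := by ring
          _ ≤ c * m := Nat.mul_le_mul_left c hm2
          _ = z + 4 := hm.symm
        have hz1 : z = 1 := by omega
        have hc2 : c = 2 := by omega
        rw [hz1, hc2] at hm
        omega
    · -- t = 2 * c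
      have hcz4 : c ∣ z + 4 := by
        have hd : c ∣ 2 * c := dvd_mul_left c 2
        have hne : n = 2 * c + (z + 4) := by omega
        exact (Nat.dvd_add_right hd).mp (hne ▸ hcn)
      have hcle : c ≤ z + 4 := Nat.le_of_dvd (by omega) hcz4
      rcases Nat.eq_or_lt_of_le hcle with hceq | hclt2
      · have hz4 : z ∣ 4 := (Nat.dvd_add_right (dvd_refl z)).mp (hceq ▸ hzc)
        rcases dvd4cases' z hz4 with rfl | rfl | rfl
        · have hq : q = 15 := by omega
          subst hq; exact squarefree_of_bounded' 15 (by norm_num) (by decide)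
        · omega
        · have hq : q = 6 := by omega
          subst hq; exact squarefree_of_bounded' 6 (by norm_num) (by decide)
      · obtain ⟨m, hm⟩ := hcz4
        have hm2 : 2 ≤ m := by
          rcases m with _ | _ | m <;> omega
        have h2c : 2 * c ≤ z + 4 := by
          calc 2 * c = c * 2 := by ring
          _ ≤ c * m := Nat.mul_le_mul_left c hm2
          _ = z + 4 := hm.symm
        have hz1 : z = 1 := by omega
        have hc2 : c = 2 := by omega
        rw [hz1, hc2] at hm
        omega

end Aux

/-- The center as an additive subgroup. -/
def centerAddSubgroup (R : Type*) [NonUnitalRing R] : AddSubgroup R where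
  carrier := centerSet R
  add_mem' := by intro a b ha hb y; rw [add_mul, mul_add, ha y, hb y]
  zero_mem' := by intro y; rw [zero_mul, mul_zero]
  neg_mem' := by intro a ha y; rw [neg_mul, mul_neg, ha y]

/-- The additive commutator map with `x`. -/
def commHom {R : Type*} [NonUnitalRing R] (x : R) : R →+ R :=
  AddMonoidHom.mk' (fun y => x * y - y * x) (by
    intro a b
    show x * (a + b) - (a + b) * x = (x * a - a * x) + (x * b - b * x)
    rw [mul_add, add_mul]; abel)

/-- if R is noncommutative with |R| ≠ 16, 18 and r ∈ K(R), then Δ_R^r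
has no vertex of degree 3. -/
theorem stmt19 {R : Type*} [NonUnitalRing R] [Fintype R]
    (hnc : ∃ a b : R, a * b ≠ b * a) (hcard16 : Nat.card R ≠ 16)
    (hcard18 : Nat.card R ≠ 18)
    (r : R) (hr : ∃ a b : R, a * b - b * a = r) :
    ∀ x : {a : R // a ∉ centerSet R}, ((deltaGraph r).neighborSet x).ncard ≠ 3 := by
  intro x hdeg
  classical
  set f : R →+ R := commHom (x : R) with hf
  have hfval : ∀ y : R, f y = (x : R) * y - y * (x : R) := fun y => rfl
  set Zs : AddSubgroup R := centerAddSubgroup R with hZs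
  set Cs : AddSubgroup R := f.ker with hCs
  set n : ℕ := Nat.card R with hn
  set z : ℕ := Nat.card Zs with hz
  set c : ℕ := Nat.card Cs with hc
  set q : ℕ := Nat.card (R ⧸ Zs) with hq
  have hZsSet : (Zs : Set R) = centerSet R := rfl
  have hZleC : Zs ≤ Cs := by
    intro w hw
    rw [AddMonoidHom.mem_ker, hfval, hw (x : R), sub_self]
  have hCsSet : (Cs : Set R) = f ⁻¹' {0} := by
    ext y
    simp only [SetLike.mem_coe, hCs, AddMonoidHom.mem_ker, Set.mem_preimage,
      Set.mem_singleton_iff]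
  -- basic divisibilities
  have hzdvdc : z ∣ c := AddSubgroup.card_dvd_of_le hZleC
  have hcdvdn : c ∣ n := AddSubgroup.card_addSubgroup_dvd_card Cs
  have hnq : n = q * z := AddSubgroup.card_eq_card_quotient_mul_card_addSubgroup Zs
  have hzpos : 0 < z := Nat.card_pos
  -- x is in Cs but not in Zs
  have hxC : (x : R) ∈ Cs := by rw [AddMonoidHom.mem_ker, hfval, sub_self]
  have hzset : z = (Zs : Set R).ncard := by rw [hz, ← Nat.card_coe_set_eq]; rfl
  have hcset : c = (Cs : Set R).ncard := by rw [hc, ← Nat.card_coe_set_eq]; rfl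
  have hzltc : z < c := by
    rw [hzset, hcset]
    apply Set.ncard_lt_ncard _ (Set.toFinite _)
    constructor
    · exact hZleC
    · intro hsub
      exact x.2 (hsub hxC)
  have hcltn : c < n := by
    obtain ⟨a, ha⟩ : ∃ a : R, ¬ (x : R) * a = a * (x : R) := by
      by_contra hcon
      push_neg at hcon
      exact x.2 hcon
    rw [hcset, hn, ← Set.ncard_univ]
    apply Set.ncard_lt_ncard _ (Set.toFinite _)
    constructor
    · exact Set.subset_univ _
    · intro hsub
      have : a ∈ Cs := hsub (Set.mem_univ a)
      rw [AddMonoidHom.mem_ker, hfval, sub_eq_zero] at this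
      exact ha this
  -- sets
  set S : Set R := (centerSet R)ᶜ with hSdef
  set T : Set R := f ⁻¹' {r} ∪ f ⁻¹' {-r} with hTdef
  set B : Set R := {(x : R)} ∪ T with hBdef
  -- the image of the neighbor set
  have hA : Subtype.val '' ((deltaGraph r).neighborSet x) = S \ B := by
    ext y
    simp only [Set.mem_image, SimpleGraph.mem_neighborSet, deltaGraph, SimpleGraph.comap_adj,
      ncGraph, hSdef, hBdef, hTdef, Set.mem_diff, Set.mem_compl_iff, Set.mem_union,
      Set.mem_singleton_iff, Set.mem_preimage]
    constructor
    · rintro ⟨w, ⟨hne, h1, h2⟩, rfl⟩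
      refine ⟨w.2, ?_⟩
      push_neg
      refine ⟨?_, ?_, ?_⟩
      · intro hh; exact hne hh.symm
      · rw [hfval]; exact h1
      · rw [hfval]; exact h2
    · rintro ⟨hyns, hnB⟩
      push_neg at hnB
      obtain ⟨hyx, h1, h2⟩ := hnB
      refine ⟨⟨y, hyns⟩, ⟨?_, ?_, ?_⟩, rfl⟩
      · intro hh; exact hyx hh.symm
      · rw [hfval] at h1; exact h1
      · rw [hfval] at h2; exact h2
  have hdeg' : (S \ B).ncard = 3 := by
    rw [← hA, Set.ncard_image_of_injective _ Subtype.val_injective]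
    exact hdeg
  -- cardinality bookkeeping
  have hzncard : (centerSet R).ncard = z := by
    rw [hzset]; rfl
  have hScard : (centerSet R).ncard + S.ncard = n := by
    rw [hn, ← Set.ncard_add_ncard_compl (centerSet R)]
  have hsplit : (S \ B).ncard + (S ∩ B).ncard = S.ncard := by
    rw [← Set.diff_self_inter]
    exact Set.ncard_diff_add_ncard_of_subset Set.inter_subset_left (Set.toFinite _)
  have hccard : ((Cs : Set R)).ncard = c := hcset.symm
  -- fibers of f
  have fib : ∀ t0 : R, (f ⁻¹' {t0}).ncard = 0 ∨ (f ⁻¹' {t0}).ncard = c := by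
    intro t0
    rcases Set.eq_empty_or_nonempty (f ⁻¹' {t0}) with he | ⟨y0, hy0⟩
    · left; rw [he]; exact Set.ncard_empty R
    · right
      have himg : (fun u => u + y0) '' (f ⁻¹' {0}) = f ⁻¹' {t0} := by
        ext u
        simp only [Set.mem_image, Set.mem_preimage, Set.mem_singleton_iff] at *
        constructor
        · rintro ⟨v, hv, rfl⟩
          rw [map_add, hv, zero_add, hy0]
        · intro hu
          refine ⟨u - y0, ?_, by abel⟩
          rw [map_sub, hu, hy0, sub_self]
      rw [← himg, Set.ncard_image_of_injective _ (add_left_injective y0), ← hccard, hCsSet]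
  by_cases hr0 : r = 0
  · -- case r = 0 : T = Cs, n = c + 3
    subst hr0
    have hT : T = (Cs : Set R) := by
      rw [hTdef, hCsSet, neg_zero, Set.union_self]
    have hxT : (x : R) ∈ T := by rw [hT]; exact hxC
    have hBT : B = T := by
      rw [hBdef, Set.union_eq_self_of_subset_left (Set.singleton_subset_iff.mpr hxT)]
    have hSB : S ∩ B = (Cs : Set R) \ centerSet R := by
      rw [hBT, hT, hSdef, Set.inter_comm]
      exact (Set.diff_eq _ _).symm
    have hBC : ((Cs : Set R) \ centerSet R).ncard + (centerSet R).ncard = c := by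
      rw [← hccard]
      exact Set.ncard_diff_add_ncard_of_subset hZleC (Set.toFinite _)
    have hkey : n = c + 3 := by
      rw [hSB] at hsplit
      omega
    have hsf : Squarefree q :=
      numCore' z c n q 0 hzpos hzdvdc hcdvdn hzltc hcltn hnq hcard16 hcard18 (Or.inl hkey)
    have hcyc : IsAddCyclic (R ⧸ Zs) := isAddCyclic_of_squarefree_card' (hq ▸ hsf)
    obtain ⟨a, b, hab⟩ := hnc
    exact hab (comm_of_quot_isAddCyclic' Zs (fun w hw a => hw a) hcyc a b)
  · -- case r ≠ 0
    have hTS : T ⊆ S := by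
      intro y hy
      rw [hSdef, Set.mem_compl_iff]
      intro hyc
      have h0 : f y = 0 := by rw [hfval, hyc (x : R), sub_self]
      rcases hy with hy | hy
      · rw [Set.mem_preimage, Set.mem_singleton_iff, h0] at hy
        exact hr0 hy.symm
      · rw [Set.mem_preimage, Set.mem_singleton_iff, h0] at hy
        exact hr0 (neg_eq_zero.mp hy.symm)
    have hxS : (x : R) ∈ S := x.2
    have hxT : (x : R) ∉ T := by
      intro hy
      have h0 : f (x : R) = 0 := by rw [hfval, sub_self]
      rcases hy with hy | hy
      · rw [Set.mem_preimage, Set.mem_singleton_iff, h0] at hy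
        exact hr0 hy.symm
      · rw [Set.mem_preimage, Set.mem_singleton_iff, h0] at hy
        exact hr0 (neg_eq_zero.mp hy.symm)
    have hSB : S ∩ B = B := by
      apply Set.inter_eq_self_of_subset_right
      rw [hBdef]
      exact Set.union_subset (Set.singleton_subset_iff.mpr hxS) hTS
    have hBcard : B.ncard = T.ncard + 1 := by
      rw [hBdef, Set.singleton_union, Set.ncard_insert_of_notMem hxT (Set.toFinite _)]
    have ht : T.ncard = 0 ∨ T.ncard = c ∨ T.ncard = 2 * c := by
      by_cases hrr : r = -r
      · have : T = f ⁻¹' {r} := by rw [hTdef, ← hrr, Set.union_self]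
        rw [this]
        rcases fib r with h | h
        · left; exact h
        · right; left; exact h
      · have hdisj : Disjoint (f ⁻¹' {r}) (f ⁻¹' {-r}) := by
          apply Set.disjoint_left.mpr
          intro u hu1 hu2
          rw [Set.mem_preimage, Set.mem_singleton_iff] at hu1 hu2
          exact hrr (hu1.symm.trans hu2)
        have : T.ncard = (f ⁻¹' {r}).ncard + (f ⁻¹' {-r}).ncard := by
          rw [hTdef]
          exact Set.ncard_union_eq hdisj (Set.toFinite _) (Set.toFinite _)
        rcases fib r with h1 | h1 <;> rcases fib (-r) with h2 | h2 <;> omega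
    have hkey : n = z + 4 + T.ncard := by
      rw [hSB] at hsplit
      omega
    have hsf : Squarefree q :=
      numCore' z c n q T.ncard hzpos hzdvdc hcdvdn hzltc hcltn hnq hcard16 hcard18
        (Or.inr ⟨ht, hkey⟩)
    have hcyc : IsAddCyclic (R ⧸ Zs) := isAddCyclic_of_squarefree_card' (hq ▸ hsf)
    obtain ⟨a, b, hab⟩ := hnc
    exact hab (comm_of_quot_isAddCyclic' Zs (fun w hw a => hw a) hcyc a b)
end
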